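/- For α ∈ (0,1/2], t ∈ (0, 1-α], c = cos(πα), and the GGC random variable X_{c,t} with Laplace transform E[e^{-λX_{c,t}}] = 1/(1 + 2cλ^t + λ^{2t}), one has E[X_{c,t}^{-t}] = πα/(sin(πα)·Γ(t+1)). -/

import Mathlib

open Real Set MeasureTheory

lemma arctan_integral_aux {c s : ℝ} (hs : 0 < s) :
    IntegrableOn (fun u : ℝ => 1 / ((u + c) ^ 2 + s ^ 2)) (Ioi 0) ∧
    ∫ u in Ioi 0, 1 / ((u + c) ^ 2 + s ^ 2) = (π / 2 - Real.arctan (c / s)) / s := by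
  set g : ℝ → ℝ := fun u => (1 / s) * Real.arctan ((u + c) / s) with hg
  have hderiv : ∀ x ∈ Ici (0:ℝ), HasDerivAt g (1 / ((x + c) ^ 2 + s ^ 2)) x := by
    intro x _
    have h1 : HasDerivAt (fun u : ℝ => (u + c) / s) (1 / s) x := by
      simpa using ((hasDerivAt_id x).add_const c).div_const s
    have h3 := ((Real.hasDerivAt_arctan ((x + c) / s)).comp x h1).const_mul (1 / s)
    refine HasDerivAt.congr_deriv h3 ?_
    have hs' : s ≠ 0 := ne_of_gt hs
    field_simp
    ring
  have hnonneg : ∀ x ∈ Ioi (0:ℝ), 0 ≤ 1 / ((x + c) ^ 2 + s ^ 2) := fun x _ => by positivity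
  have htend : Filter.Tendsto g Filter.atTop (nhds ((1 / s) * (π / 2))) := by
    have h1 : Filter.Tendsto (fun u : ℝ => (u + c) / s) Filter.atTop Filter.atTop :=
      (Filter.tendsto_atTop_add_const_right _ c Filter.tendsto_id).atTop_div_const hs
    exact ((Real.tendsto_arctan_atTop.mono_right nhdsWithin_le_nhds).comp h1).const_mul _
  refine ⟨integrableOn_Ioi_deriv_of_nonneg' hderiv hnonneg htend, ?_⟩
  rw [integral_Ioi_of_hasDerivAt_of_nonneg' hderiv hnonneg htend]
  simp only [hg, zero_add]
  field_simp

lemma arctan_cos_div_sin_aux {θ : ℝ} (h0 : 0 < θ) (hπ : θ < π) :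
    Real.arctan (Real.cos θ / Real.sin θ) = π / 2 - θ := by
  rw [show Real.cos θ / Real.sin θ = Real.tan (π / 2 - θ) by
    rw [Real.tan_eq_sin_div_cos, Real.sin_pi_div_two_sub, Real.cos_pi_div_two_sub]]
  exact Real.arctan_tan (by linarith) (by linarith)

/-- For `α ∈ (0,1/2]`, `t ∈ (0,1-α]`, `c = cos(πα)`, and `X` with Laplace transform
`1/(1 + 2cλ^t + λ^{2t})`, one has `E[X^{-t}] = πα/(sin(πα)Γ(t+1))`. -/
theorem neg_t_moment_X {Ω : Type*} [MeasurableSpace Ω] (μ : Measure Ω)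
    [IsProbabilityMeasure μ] (α t : ℝ) (hα : α ∈ Ioc (0:ℝ) (1/2))
    (ht : t ∈ Ioc (0:ℝ) (1 - α)) (X : Ω → ℝ) (hXpos : ∀ᵐ ω ∂μ, 0 < X ω)
    (hLap : ∀ l : ℝ, 0 ≤ l →
      ∫ ω, Real.exp (-(l * X ω)) ∂μ =
        1 / (1 + 2 * Real.cos (π * α) * l ^ t + l ^ (2 * t))) :
    ∫ ω, (X ω) ^ (-t) ∂μ = π * α / (Real.sin (π * α) * Real.Gamma (t + 1)) := by
  obtain ⟨hα0, hα2⟩ := hα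
  obtain ⟨ht0, ht1⟩ := ht
  have hπ := Real.pi_pos
  set θ : ℝ := π * α with hθdef
  have hθ0 : 0 < θ := by positivity
  have hθ2 : θ ≤ π / 2 := by rw [hθdef]; nlinarith
  have hθπ : θ < π := by nlinarith
  set c : ℝ := Real.cos θ with hcdef
  set s : ℝ := Real.sin θ with hsdef
  have hs : 0 < s := Real.sin_pos_of_pos_of_lt_pi hθ0 hθπ
  have hc0 : 0 ≤ c := Real.cos_nonneg_of_mem_Icc ⟨by linarith, hθ2⟩
  have hcs : c ^ 2 + s ^ 2 = 1 := by rw [hcdef, hsdef]; exact Real.cos_sq_add_sin_sq θ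
  have hΓ : 0 < Real.Gamma t := Real.Gamma_pos_of_pos ht0
  have hΓ1 : 0 < Real.Gamma (t + 1) := Real.Gamma_pos_of_pos (by linarith)
  -- rewrite the denominator as a sum of squares
  have hQ : ∀ l : ℝ, 0 < l →
      1 + 2 * c * l ^ t + l ^ (2 * t) = (l ^ t + c) ^ 2 + s ^ 2 := by
    intro l hl
    have h2t : l ^ (2 * t) = (l ^ t) ^ 2 := by
      rw [mul_comm, Real.rpow_mul hl.le, Real.rpow_two]
    rw [h2t]; nlinarith
  have hQpos : ∀ l : ℝ, 0 ≤ l → 0 < 1 + 2 * c * l ^ t + l ^ (2 * t) := by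
    intro l hl
    have h1 : 0 ≤ l ^ t := Real.rpow_nonneg hl t
    have h2 : 0 ≤ l ^ (2 * t) := Real.rpow_nonneg hl _
    nlinarith
  -- integrability of the Laplace integrand
  have hIntExp : ∀ l : ℝ, 0 ≤ l → Integrable (fun ω => Real.exp (-(l * X ω))) μ := by
    intro l hl
    by_contra h
    have h1 := hLap l hl
    rw [integral_undef h] at h1
    have h2 := hQpos l hl
    have h3 : (0:ℝ) < 1 / (1 + 2 * c * l ^ t + l ^ (2 * t)) := by positivity
    rw [← h1] at h3
    exact lt_irrefl _ h3
  -- measurability of X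
  have hX : AEMeasurable X μ := by
    have h1 : AEMeasurable (fun ω => Real.exp (-(1 * X ω))) μ :=
      (hIntExp 1 zero_le_one).aemeasurable
    have h2 : AEMeasurable (fun ω => -Real.log (Real.exp (-(1 * X ω)))) μ :=
      (Real.measurable_log.comp_aemeasurable h1).neg
    simpa [Real.log_exp] using h2
  set ν : Measure ℝ := volume.restrict (Ioi 0) with hν
  -- inner Gamma integral
  have inner : ∀ x : ℝ, 0 < x →
      ∫⁻ l in Ioi (0:ℝ), ENNReal.ofReal (l ^ (t-1) * Real.exp (-(l * x)))
        = ENNReal.ofReal (Real.Gamma t * x ^ (-t)) := by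
    intro x hx
    have hint : IntegrableOn (fun l : ℝ => l ^ (t-1) * Real.exp (-(l * x))) (Ioi 0) := by
      have h := integrableOn_rpow_mul_exp_neg_mul_rpow
        (show (-1:ℝ) < t - 1 by linarith) zero_lt_one hx
      refine h.congr_fun (fun l hl => ?_) measurableSet_Ioi
      beta_reduce; rw [Real.rpow_one]; ring_nf
    have hnn : 0 ≤ᵐ[ν] fun l : ℝ => l ^ (t-1) * Real.exp (-(l * x)) := by
      filter_upwards [ae_restrict_mem measurableSet_Ioi] with l hl
      have : (0:ℝ) < l := hl
      positivity
    rw [← ofReal_integral_eq_lintegral_ofReal hint hnn,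
        show (∫ l in Ioi (0:ℝ), l ^ (t-1) * Real.exp (-(l * x)))
            = ∫ l in Ioi (0:ℝ), l ^ (t-1) * Real.exp (-(x * l)) from by
          congr 1; funext l; rw [mul_comm l x],
        Real.integral_rpow_mul_exp_neg_mul_Ioi ht0 hx]
    congr 1
    rw [one_div, Real.inv_rpow hx.le, ← Real.rpow_neg hx.le, mul_comm]
  -- Laplace transform in ENNReal form
  have lap : ∀ l : ℝ, 0 < l →
      ∫⁻ ω, ENNReal.ofReal (Real.exp (-(l * X ω))) ∂μ
        = ENNReal.ofReal (1 / ((l ^ t + c) ^ 2 + s ^ 2)) := by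
    intro l hl
    rw [← ofReal_integral_eq_lintegral_ofReal (hIntExp l hl.le)
        (Filter.Eventually.of_forall fun ω => (Real.exp_pos _).le),
      hLap l hl.le, hQ l hl]
  -- joint measurability
  have hprod_pos : ∀ᵐ p : Ω × ℝ ∂(μ.prod ν), 0 < p.2 := by
    have hset : {p : Ω × ℝ | ¬ 0 < p.2} = (univ : Set Ω) ×ˢ Iic (0:ℝ) := by
      ext p; simp [not_lt]
    rw [ae_iff, hset, Measure.prod_prod, hν,
      Measure.restrict_apply measurableSet_Iic]
    simp [Set.Iic_inter_Ioi, Set.Ioc_self]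
  have hG : AEMeasurable (fun p : Ω × ℝ => p.2 ^ (t-1) * Real.exp (-(p.2 * X p.1)))
      (μ.prod ν) := by
    have m1 : AEMeasurable (fun p : Ω × ℝ => X p.1) (μ.prod ν) := hX.comp_fst
    have m2 : AEMeasurable
        (fun p : Ω × ℝ => Real.exp (Real.log p.2 * (t-1)) * Real.exp (-(p.2 * X p.1)))
        (μ.prod ν) := by
      refine AEMeasurable.mul ?_ ?_
      · exact (Real.measurable_exp.comp
          ((Real.measurable_log.comp measurable_snd).mul measurable_const)).aemeasurable
      · exact Real.measurable_exp.comp_aemeasurable (measurable_snd.aemeasurable.mul m1).neg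
    refine m2.congr ?_
    filter_upwards [hprod_pos] with p hp
    rw [Real.rpow_def_of_pos hp]
  have hmeas : AEMeasurable
      (fun p : Ω × ℝ => ENNReal.ofReal (p.2 ^ (t-1) * Real.exp (-(p.2 * X p.1))))
      (μ.prod ν) := ENNReal.measurable_ofReal.comp_aemeasurable hG
  -- the real substitution integral
  have hf_int : IntegrableOn (fun u : ℝ => 1 / ((u + c) ^ 2 + s ^ 2)) (Ioi 0) :=
    (arctan_integral_aux hs).1
  have hg_int : IntegrableOn
      (fun l : ℝ => l ^ (t-1) * (1 / ((l ^ t + c) ^ 2 + s ^ 2))) (Ioi 0) := by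
    have h := (integrableOn_Ioi_comp_rpow_iff'
      (fun u : ℝ => 1 / ((u + c) ^ 2 + s ^ 2)) ht0.ne').mpr hf_int
    simpa [smul_eq_mul] using h
  have hg_val : ∫ l in Ioi (0:ℝ), l ^ (t-1) * (1 / ((l ^ t + c) ^ 2 + s ^ 2))
      = θ / (t * s) := by
    have h1 := integral_comp_rpow_Ioi_of_pos
      (g := fun u : ℝ => 1 / ((u + c) ^ 2 + s ^ 2)) (p := t) ht0
    have h2 : ∫ x in Ioi (0:ℝ), (t * x ^ (t-1)) • (1 / ((x ^ t + c) ^ 2 + s ^ 2))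
        = t * ∫ l in Ioi (0:ℝ), l ^ (t-1) * (1 / ((l ^ t + c) ^ 2 + s ^ 2)) := by
      rw [← integral_const_mul]
      congr 1
      funext x
      simp only [smul_eq_mul]
      ring
    rw [h2] at h1
    have h3 : ∫ u in Ioi (0:ℝ), 1 / ((u + c) ^ 2 + s ^ 2) = θ / s := by
      rw [(arctan_integral_aux hs).2, hcdef, hsdef, arctan_cos_div_sin_aux hθ0 hθπ]
      ring
    rw [h3] at h1
    field_simp at h1 ⊢
    linarith
  -- Tonelli
  set I : ENNReal := ∫⁻ ω, ENNReal.ofReal ((X ω) ^ (-t)) ∂μ with hIdef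
  have lhs_eq : (∫⁻ ω, (∫⁻ l in Ioi (0:ℝ),
      ENNReal.ofReal (l ^ (t-1) * Real.exp (-(l * X ω)))) ∂μ)
      = ENNReal.ofReal (Real.Gamma t) * I := by
    rw [hIdef, ← lintegral_const_mul' _ _ ENNReal.ofReal_ne_top]
    apply lintegral_congr_ae
    filter_upwards [hXpos] with ω hω
    rw [inner (X ω) hω, ENNReal.ofReal_mul hΓ.le]
  have rhs_eq : (∫⁻ l in Ioi (0:ℝ), ∫⁻ ω,
      ENNReal.ofReal (l ^ (t-1) * Real.exp (-(l * X ω))) ∂μ)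
      = ENNReal.ofReal (θ / (t * s)) := by
    have step1 : (∫⁻ l in Ioi (0:ℝ), ∫⁻ ω,
        ENNReal.ofReal (l ^ (t-1) * Real.exp (-(l * X ω))) ∂μ)
        = ∫⁻ l in Ioi (0:ℝ),
          ENNReal.ofReal (l ^ (t-1) * (1 / ((l ^ t + c) ^ 2 + s ^ 2))) := by
      apply lintegral_congr_ae
      filter_upwards [ae_restrict_mem measurableSet_Ioi] with l hl
      have hl0 : (0:ℝ) < l := hl
      have e1 : ∀ ω, ENNReal.ofReal (l ^ (t-1) * Real.exp (-(l * X ω)))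
          = ENNReal.ofReal (l ^ (t-1)) * ENNReal.ofReal (Real.exp (-(l * X ω))) :=
        fun ω => ENNReal.ofReal_mul (Real.rpow_nonneg hl0.le _)
      simp_rw [e1]
      rw [lintegral_const_mul' _ _ ENNReal.ofReal_ne_top, lap l hl0,
        ← ENNReal.ofReal_mul (Real.rpow_nonneg hl0.le _)]
    rw [step1, ← ofReal_integral_eq_lintegral_ofReal hg_int ?_, hg_val]
    filter_upwards [ae_restrict_mem measurableSet_Ioi] with l hl
    have hl0 : (0:ℝ) < l := hl
    positivity
  have key : ENNReal.ofReal (Real.Gamma t) * I = ENNReal.ofReal (θ / (t * s)) := by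
    rw [← lhs_eq, ← rhs_eq]
    exact lintegral_lintegral_swap (μ := μ) (ν := volume.restrict (Ioi 0))
      (f := fun (ω : Ω) (l : ℝ) => ENNReal.ofReal (l ^ (t-1) * Real.exp (-(l * X ω)))) hmeas
  -- solve for I
  have hΓadd : Real.Gamma (t + 1) = t * Real.Gamma t := Real.Gamma_add_one ht0.ne'
  have hval : θ / (t * s) = Real.Gamma t * (θ / (s * Real.Gamma (t + 1))) := by
    rw [hΓadd]; field_simp
  have hI : I = ENNReal.ofReal (θ / (s * Real.Gamma (t + 1))) := by
    rw [hval, ENNReal.ofReal_mul hΓ.le] at key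
    exact (ENNReal.mul_right_inj
      (by simp [ENNReal.ofReal_eq_zero, not_le, hΓ]) ENNReal.ofReal_ne_top).mp key
  -- conclude
  have hnn : 0 ≤ᵐ[μ] fun ω => (X ω) ^ (-t) :=
    hXpos.mono fun ω hω => (Real.rpow_pos_of_pos hω _).le
  have hsm : AEStronglyMeasurable (fun ω => (X ω) ^ (-t)) μ := by
    have m2 : AEMeasurable (fun ω => Real.exp (Real.log (X ω) * (-t))) μ :=
      Real.measurable_exp.comp_aemeasurable
        ((Real.measurable_log.comp_aemeasurable hX).mul aemeasurable_const)
    refine (m2.congr ?_).aestronglyMeasurable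
    filter_upwards [hXpos] with ω hω
    rw [Real.rpow_def_of_pos hω]
  rw [integral_eq_lintegral_of_nonneg_ae hnn hsm]
  have : (∫⁻ ω, ENNReal.ofReal ((X ω) ^ (-t)) ∂μ) = I := hIdef.symm
  rw [this, hI, ENNReal.toReal_ofReal (by positivity)]
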